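/- arXiv:2209.05081 — 7 statements merged into one kernel-verified Lean document; each statement's English description precedes it below -/
import Mathlib

section
/- Let p, q, y_I, y_M be real numbers and let a : ℕ → ℝ be the ensemble-average sequence a(n) = (P_b^n)₁₁·y_I + (P_b^n)₁₂·y_M. Then a(0) = y_I, a(1) = p·y_I + (1−p)·y_M, and for every n ≥ 2, a(n) = (p+q)·a(n−1) − p·q·a(n−2). -/
open Matrix

noncomputable def Pb (p q : ℝ) : Matrix (Fin 3) (Fin 3) ℝ :=
  !![p, 1 - p, 0; 0, q, 1 - q; 0, 0, 1]

theorem stmt_0 (p q yI yM : ℝ)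
    (a : ℕ → ℝ) (ha : ∀ n, a n = (Pb p q ^ n) 0 0 * yI + (Pb p q ^ n) 0 1 * yM) :
    a 0 = yI ∧ a 1 = p * yI + (1 - p) * yM ∧
      ∀ n, 2 ≤ n → a n = (p + q) * a (n - 1) - p * q * a (n - 2) := by
  have h00 : ∀ n : ℕ, (Pb p q ^ (n + 1)) 0 0 = (Pb p q ^ n) 0 0 * p := by
    intro n
    rw [pow_succ]
    simp [Pb, Matrix.mul_apply, Fin.sum_univ_three, Matrix.vecHead, Matrix.vecTail]
  have h01 : ∀ n : ℕ, (Pb p q ^ (n + 1)) 0 1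
      = (Pb p q ^ n) 0 0 * (1 - p) + (Pb p q ^ n) 0 1 * q := by
    intro n
    rw [pow_succ]
    simp [Pb, Matrix.mul_apply, Fin.sum_univ_three, Matrix.vecHead, Matrix.vecTail]
  refine ⟨by simp [ha 0], ?_, ?_⟩
  · rw [ha 1]
    have := h00 0
    have := h01 0
    simp [h00 0, h01 0]
    try ring
  · intro n hn
    obtain ⟨m, rfl⟩ : ∃ m, n = m + 2 := ⟨n - 2, by omega⟩
    simp only [Nat.add_sub_cancel, show m + 2 - 1 = m + 1 from rfl]
    rw [ha (m + 2), ha (m + 1), ha m, show m + 2 = (m + 1) + 1 from rfl,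
      h00 (m + 1), h01 (m + 1), h00 m, h01 m]
    ring
end

section
/- Let p, q, k_I, k_M be real numbers with q ≠ p, p ≠ 1, and k_M = q·k_I/(1−p). Then for every n ≥ 0, the sequence b(n) = (P_b^n)₁₁·k_I + (P_b^n)₁₂·k_M satisfies b(n) = ((q^{n+1} − p^{n+1})/(q − p))·k_I. -/
open Matrix

lemma Pb_entries (p q : ℝ) : ∀ n : ℕ, (Pb p q ^ n) 0 0 = p ^ n ∧
    (q - p) * (Pb p q ^ n) 0 1 = (1 - p) * (q ^ n - p ^ n) := by
  intro n
  induction n with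
  | zero => simp [Matrix.one_apply]
  | succ n ih =>
    obtain ⟨h0, h1⟩ := ih
    simp only [Pb] at h0 h1 ⊢
    rw [pow_succ]
    constructor
    · simp [Matrix.mul_apply, Fin.sum_univ_three, Matrix.vecHead, Matrix.vecTail]
      rw [h0]; ring
    · simp [Matrix.mul_apply, Fin.sum_univ_three, Matrix.vecHead, Matrix.vecTail]
      rw [h0]
      linear_combination q * h1

theorem stmt_3 (p q kI kM : ℝ) (hpq : q ≠ p) (hp : p ≠ 1)
    (hkM : kM = q * kI / (1 - p))
    (b : ℕ → ℝ) (hb : ∀ n, b n = (Pb p q ^ n) 0 0 * kI + (Pb p q ^ n) 0 1 * kM) :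
    ∀ n, b n = ((q ^ (n + 1) - p ^ (n + 1)) / (q - p)) * kI := by
  intro n
  obtain ⟨h0, h1⟩ := Pb_entries p q n
  have hqp : q - p ≠ 0 := sub_ne_zero.mpr hpq
  have hp1 : (1 : ℝ) - p ≠ 0 := sub_ne_zero.mpr (Ne.symm hp)
  have h1' : (Pb p q ^ n) 0 1 = (1 - p) * (q ^ n - p ^ n) / (q - p) := by
    field_simp
    linarith [h1]
  rw [hb n, h0, hkM, h1']
  field_simp
  ring
end

section
/- Let p, q, β, y_I, y_M be real numbers with 0 ≤ p < 1, 0 ≤ q < 1 and 0 < β < 1, and let a(n) = (P_b^n)₁₁·y_I + (P_b^n)₁₂·y_M. Then the series Σ_{n=0}^∞ β^n·a(n) converges and equals (1/(1−β·p))·(y_I + (β·(1−p)/(1−β·q))·y_M). Equivalently, the present discount value multiplier (1−β·p)·Σ_{n=0}^∞ β^n·a(n) equals y_I + (β·(1−p)/(1−β·q))·y_M. -/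
open Matrix

lemma Pb_pow00 (p q : ℝ) : ∀ n, (Pb p q ^ n) 0 0 = p ^ n := by
  intro n
  induction n with
  | zero => simp
  | succ n ih =>
    rw [pow_succ, Matrix.mul_apply, Fin.sum_univ_three]
    simp [Pb] at ih ⊢
    simp [ih, pow_succ, Matrix.vecHead, Matrix.vecTail]

lemma Pb_pow01_succ (p q : ℝ) (n : ℕ) :
    (Pb p q ^ (n + 1)) 0 1 = p ^ n * (1 - p) + q * (Pb p q ^ n) 0 1 := by
  have h00 := Pb_pow00 p q n
  rw [pow_succ, Matrix.mul_apply, Fin.sum_univ_three]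
  simp [Pb] at h00 ⊢
  rw [h00]
  ring

lemma Pb_pow01_bounds (p q : ℝ) (hp0 : 0 ≤ p) (hp1 : p ≤ 1) (hq0 : 0 ≤ q) (hq1 : q ≤ 1) :
    ∀ n, 0 ≤ (Pb p q ^ n) 0 1 ∧ (Pb p q ^ n) 0 1 ≤ 1 - p ^ n := by
  intro n
  induction n with
  | zero => simp
  | succ n ih =>
    obtain ⟨h0, h1⟩ := ih
    rw [Pb_pow01_succ]
    constructor
    · have := pow_nonneg hp0 n
      nlinarith
    · have hpn : p ^ n ≤ 1 := pow_le_one₀ hp0 hp1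
      have hpn0 : 0 ≤ p ^ n := pow_nonneg hp0 n
      have : q * (Pb p q ^ n) 0 1 ≤ 1 - p ^ n := by nlinarith
      rw [pow_succ]
      nlinarith

theorem stmt_4 (p q β yI yM : ℝ) (hp0 : 0 ≤ p) (hp1 : p < 1) (hq0 : 0 ≤ q) (hq1 : q < 1)
    (hβ0 : 0 < β) (hβ1 : β < 1)
    (a : ℕ → ℝ) (ha : ∀ n, a n = (Pb p q ^ n) 0 0 * yI + (Pb p q ^ n) 0 1 * yM) :
    HasSum (fun n => β ^ n * a n)
        ((1 / (1 - β * p)) * (yI + (β * (1 - p) / (1 - β * q)) * yM)) ∧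
      (1 - β * p) * (∑' n, β ^ n * a n) = yI + (β * (1 - p) / (1 - β * q)) * yM := by
  set B : ℕ → ℝ := fun n => (Pb p q ^ n) 0 1 with hB
  set f : ℕ → ℝ := fun n => β ^ n * B n with hf
  have hβp0 : 0 ≤ β * p := mul_nonneg hβ0.le hp0
  have hβp1 : β * p < 1 := by nlinarith
  have hβq1 : β * q < 1 := by nlinarith
  have h1p : (1 : ℝ) - β * p ≠ 0 := by linarith
  have h1q : (1 : ℝ) - β * q ≠ 0 := by linarith
  -- geometric sums
  have hgeo : HasSum (fun n => (β * p) ^ n) (1 - β * p)⁻¹ :=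
    hasSum_geometric_of_lt_one hβp0 hβp1
  -- summability of f
  have hbd := Pb_pow01_bounds p q hp0 hp1.le hq0 hq1.le
  have hsumf : Summable f := by
    apply Summable.of_nonneg_of_le (fun n => mul_nonneg (pow_nonneg hβ0.le n) (hbd n).1)
      (fun n => ?_) (summable_geometric_of_lt_one hβ0.le hβ1)
    have h1 : B n ≤ 1 := le_trans (hbd n).2 (by nlinarith [pow_nonneg hp0 n])
    have := pow_nonneg hβ0.le n
    calc β ^ n * B n ≤ β ^ n * 1 := by nlinarith
      _ = β ^ n := by ring
  -- recurrence for f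
  have hfrec : ∀ n, f (n + 1) = β * (1 - p) * (β * p) ^ n + β * q * f n := by
    intro n
    simp only [hf, hB, Pb_pow01_succ]
    rw [pow_succ]
    ring
  have hf0 : f 0 = 0 := by simp [hf, hB]
  set T := ∑' n, f n with hT
  have hs1 : Summable (fun n => β * (1 - p) * (β * p) ^ n) :=
    (hgeo.summable).mul_left _
  have hs2 : Summable (fun n => β * q * f n) := hsumf.mul_left _
  have hsucc : ∑' n, f (n + 1) = β * (1 - p) * (1 - β * p)⁻¹ + β * q * T := by
    rw [tsum_congr hfrec, Summable.tsum_add hs1 hs2, tsum_mul_left, tsum_mul_left, hgeo.tsum_eq, hT]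
  have hTeq : T = β * (1 - p) * (1 - β * p)⁻¹ + β * q * T := by
    calc T = f 0 + ∑' n, f (n + 1) := Summable.tsum_eq_zero_add hsumf
    _ = β * (1 - p) * (1 - β * p)⁻¹ + β * q * T := by rw [hf0, hsucc, zero_add]
  have hTval : T = β * (1 - p) / ((1 - β * p) * (1 - β * q)) := by
    field_simp at hTeq ⊢
    nlinarith [hTeq]
  have hfT : HasSum f T := hsumf.hasSum
  have hmain : HasSum (fun n => β ^ n * a n)
      ((1 / (1 - β * p)) * (yI + (β * (1 - p) / (1 - β * q)) * yM)) := by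
    have h := (hgeo.mul_right yI).add (hfT.mul_right yM)
    have heq : (fun n => (β * p) ^ n * yI + f n * yM) = fun n => β ^ n * a n := by
      funext n
      simp only [ha n, Pb_pow00, hf, hB, mul_pow]
      ring
    rw [heq] at h
    rw [show ((1 / (1 - β * p)) * (yI + (β * (1 - p) / (1 - β * q)) * yM)) = (1 - β * p)⁻¹ * yI + T * yM from ?_]
    · exact h
    rw [hTval]
    field_simp
  refine ⟨hmain, ?_⟩
  rw [hmain.tsum_eq]
  field_simp
end

section
/- Let p, q, y_I, y_M be real numbers with 0 ≤ p < 1 and 0 ≤ q < 1, and let a(n) = (P_b^n)₁₁·y_I + (P_b^n)₁₂·y_M. Then the series Σ_{n=0}^∞ a(n) converges and equals y_I/(1−p) + y_M/(1−q). -/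
open Matrix

lemma Pb_e00 (p q : ℝ) (n : ℕ) : (Pb p q ^ n) 0 0 = p ^ n := by
  induction n with
  | zero => simp
  | succ n ih =>
    rw [pow_succ, Matrix.mul_apply, Fin.sum_univ_three, ih]
    simp [Pb, Matrix.vecHead, Matrix.vecTail]
    ring

lemma Pb_rec01 (p q : ℝ) (n : ℕ) :
    (Pb p q ^ (n + 1)) 0 1 = q * (Pb p q ^ n) 0 1 + (1 - p) * p ^ n := by
  rw [pow_succ, Matrix.mul_apply, Fin.sum_univ_three, Pb_e00]
  simp [Pb, Matrix.vecHead, Matrix.vecTail]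
  ring

theorem stmt_5 (p q yI yM : ℝ) (hp0 : 0 ≤ p) (hp1 : p < 1) (hq0 : 0 ≤ q) (hq1 : q < 1)
    (a : ℕ → ℝ) (ha : ∀ n, a n = (Pb p q ^ n) 0 0 * yI + (Pb p q ^ n) 0 1 * yM) :
    HasSum a (yI / (1 - p) + yM / (1 - q)) := by
  set x : ℕ → ℝ := fun n => (Pb p q ^ n) 0 1 with hx
  have hx0 : x 0 = 0 := by simp [hx, Matrix.one_apply]
  have hrec : ∀ n, x (n + 1) = q * x n + (1 - p) * p ^ n := fun n => Pb_rec01 p q n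
  have hnn : ∀ n, 0 ≤ x n := by
    intro n
    induction n with
    | zero => simp [hx0]
    | succ n ih =>
      rw [hrec]
      have : 0 ≤ (1 - p) * p ^ n := mul_nonneg (by linarith) (pow_nonneg hp0 n)
      nlinarith
  set m : ℝ := max p q with hm
  have hpm : p ≤ m := le_max_left _ _
  have hqm : q ≤ m := le_max_right _ _
  have hm0 : 0 ≤ m := le_trans hp0 hpm
  have hm1 : m < 1 := max_lt hp1 hq1
  set r : ℝ := (1 + m) / 2 with hr
  have hmr : m ≤ r := by rw [hr]; linarith
  have hr0 : 0 ≤ r := le_trans hm0 hmr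
  have hr1 : r < 1 := by rw [hr]; linarith
  set C : ℝ := 2 / (1 - m) with hC
  have hm1' : (0:ℝ) < 1 - m := by linarith
  have hC0 : 0 ≤ C := by positivity
  have hbound : ∀ n, x n ≤ C * r ^ n := by
    intro n
    induction n with
    | zero => simpa [hx0] using hC0
    | succ n ih =>
      rw [hrec]
      have h1 : q * x n ≤ m * (C * r ^ n) :=
        mul_le_mul hqm ih (hnn n) hm0
      have h2 : (1 - p) * p ^ n ≤ r ^ n := by
        calc (1 - p) * p ^ n ≤ 1 * p ^ n := by
              apply mul_le_mul_of_nonneg_right (by linarith) (pow_nonneg hp0 n)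
          _ = p ^ n := one_mul _
          _ ≤ r ^ n := pow_le_pow_left₀ hp0 (le_trans hpm hmr) n
      have hkey : m * C + 1 ≤ C * r := le_of_eq (by
        rw [hC, hr]; field_simp; ring)
      have hrn : (0 : ℝ) ≤ r ^ n := pow_nonneg hr0 n
      calc q * x n + (1 - p) * p ^ n ≤ m * (C * r ^ n) + r ^ n := by linarith
        _ = (m * C + 1) * r ^ n := by ring
        _ ≤ (C * r) * r ^ n := mul_le_mul_of_nonneg_right hkey hrn
        _ = C * r ^ (n + 1) := by ring
  have hsum : Summable x :=
    Summable.of_nonneg_of_le hnn hbound ((summable_geometric_of_lt_one hr0 hr1).mul_left C)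
  set S : ℝ := ∑' n, x n with hS
  have hSsum : HasSum x S := hsum.hasSum
  have hshift : HasSum (fun n => x (n + 1)) S := by
    have h := (hasSum_nat_add_iff' (f := x) 1).2 hSsum
    simpa [hx0] using h
  have hcomb : HasSum (fun n => q * x n + (1 - p) * p ^ n) (q * S + (1 - p) * (1 - p)⁻¹) :=
    (hSsum.mul_left q).add ((hasSum_geometric_of_lt_one hp0 hp1).mul_left (1 - p))
  have heq : S = q * S + (1 - p) * (1 - p)⁻¹ := by
    refine HasSum.unique ?_ hcomb
    exact hshift.congr_fun (fun n => (hrec n).symm)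
  have hp1' : (1 : ℝ) - p ≠ 0 := by linarith
  have hq1' : (1 : ℝ) - q ≠ 0 := by linarith
  rw [mul_inv_cancel₀ hp1'] at heq
  have hSval : S = 1 / (1 - q) := by
    field_simp
    linarith
  have h1 : HasSum (fun n => p ^ n * yI) ((1 - p)⁻¹ * yI) :=
    (hasSum_geometric_of_lt_one hp0 hp1).mul_right yI
  have h2 : HasSum (fun n => x n * yM) (S * yM) := hSsum.mul_right yM
  have := h1.add h2
  have hfun : (fun n => p ^ n * yI + x n * yM) = a := by
    funext n
    rw [ha n, Pb_e00]
  rw [hfun] at this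
  convert this using 1
  rw [hSval]
  field_simp
end

section
/- Let p, q, k_I, k_M be real numbers with 0 ≤ p < 1, 0 < q < 1 and k_M = q·k_I/(1−p), and let b(n) = (P_b^n)₁₁·k_I + (P_b^n)₁₂·k_M. Then the series Σ_{n=0}^∞ b(n) converges and equals k_I/(1−p) + k_M/(1−q), which in turn equals k_M/(q·(1−q)). -/
open Matrix

lemma Pb_pow_entries (p q : ℝ) : ∀ n : ℕ,
    (Pb p q ^ n) 0 0 = p ^ n ∧
    (Pb p q ^ n) 0 1 = (1 - p) * ∑ i ∈ Finset.range n, p ^ i * q ^ (n - 1 - i) := by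
  intro n
  induction n with
  | zero => simp [Matrix.one_apply]
  | succ n ih =>
    obtain ⟨h00, h01⟩ := ih
    have hmul : Pb p q ^ (n + 1) = Pb p q ^ n * Pb p q := pow_succ _ _
    have e00 : Pb p q 0 0 = p := by norm_num [Pb]
    have e10 : Pb p q 1 0 = 0 := by norm_num [Pb]
    have e20 : Pb p q 2 0 = 0 := by simp [Pb, Matrix.vecHead, Matrix.vecTail]
    have e01 : Pb p q 0 1 = 1 - p := by norm_num [Pb]
    have e11 : Pb p q 1 1 = q := by norm_num [Pb]
    have e21 : Pb p q 2 1 = 0 := by simp [Pb, Matrix.vecHead, Matrix.vecTail]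
    constructor
    · rw [hmul, Matrix.mul_apply, Fin.sum_univ_three, h00, e00, e10, e20, pow_succ]
      ring
    · rw [hmul, Matrix.mul_apply, Fin.sum_univ_three, h00, h01, e01, e11, e21]
      rw [Finset.sum_range_succ]
      have hre : ∀ x ∈ Finset.range n,
          p ^ x * q ^ (n + 1 - 1 - x) = q * (p ^ x * q ^ (n - 1 - x)) := by
        intro x hx
        have hx' : x < n := Finset.mem_range.mp hx
        have h1 : n + 1 - 1 - x = n - 1 - x + 1 := by omega
        rw [h1, pow_succ]
        ring
      rw [Finset.sum_congr rfl hre, ← Finset.mul_sum]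
      have h2 : n + 1 - 1 - n = 0 := by omega
      rw [h2, pow_zero]
      ring

theorem stmt_6 (p q kI kM : ℝ) (hp0 : 0 ≤ p) (hp1 : p < 1) (hq0 : 0 < q) (hq1 : q < 1)
    (hkM : kM = q * kI / (1 - p))
    (b : ℕ → ℝ) (hb : ∀ n, b n = (Pb p q ^ n) 0 0 * kI + (Pb p q ^ n) 0 1 * kM) :
    HasSum b (kI / (1 - p) + kM / (1 - q)) ∧
      kI / (1 - p) + kM / (1 - q) = kM / (q * (1 - q)) := by
  have hp' : (1 : ℝ) - p ≠ 0 := by linarith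
  have hq' : (1 : ℝ) - q ≠ 0 := by linarith
  -- Cauchy product: f n = ∑_{i ≤ n} p^i q^{n-i}
  set f : ℕ → ℝ := fun n => ∑ i ∈ Finset.range (n + 1), p ^ i * q ^ (n - i) with hf_def
  have hpnorm : Summable fun n : ℕ => ‖p ^ n‖ := by
    simpa [abs_of_nonneg hp0, abs_of_nonneg (pow_nonneg hp0 _)] using
      (summable_geometric_of_lt_one hp0 hp1)
  have hqnorm : Summable fun n : ℕ => ‖q ^ n‖ := by
    simpa [abs_of_nonneg (pow_nonneg hq0.le _)] using
      (summable_geometric_of_lt_one hq0.le hq1)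
  have hf_summable : Summable f :=
    (summable_norm_sum_mul_range_of_summable_norm hpnorm hqnorm).of_norm
  have hf_tsum : ∑' n, f n = (1 - p)⁻¹ * (1 - q)⁻¹ := by
    rw [hf_def]
    rw [← tsum_mul_tsum_eq_tsum_sum_range_of_summable_norm hpnorm hqnorm,
      tsum_geometric_of_lt_one hp0 hp1, tsum_geometric_of_lt_one hq0.le hq1]
  have hf : HasSum f ((1 - p)⁻¹ * (1 - q)⁻¹) := hf_tsum ▸ hf_summable.hasSum
  -- the sequence a n = (Pb^n) 0 1
  set a : ℕ → ℝ := fun n => (Pb p q ^ n) 0 1 with ha_def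
  have ha0 : a 0 = 0 := by simp [ha_def, Matrix.one_apply]
  have ha_succ : ∀ n, a (n + 1) = (1 - p) * f n := by
    intro n
    rw [ha_def]
    simp only
    rw [(Pb_pow_entries p q (n + 1)).2]
    congr 1
  have ha : HasSum a ((1 - p) * ((1 - p)⁻¹ * (1 - q)⁻¹)) := by
    have h1 : HasSum (fun n => a (n + 1)) ((1 - p) * ((1 - p)⁻¹ * (1 - q)⁻¹)) := by
      simpa [ha_succ] using hf.mul_left (1 - p)
    have := (hasSum_nat_add_iff (f := a) 1).mp h1
    simpa [ha0] using this
  have ha' : HasSum a (1 - q)⁻¹ := by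
    have : (1 - p) * ((1 - p)⁻¹ * (1 - q)⁻¹) = (1 - q)⁻¹ := by
      field_simp
    rwa [this] at ha
  have hgeo : HasSum (fun n : ℕ => p ^ n) (1 - p)⁻¹ := hasSum_geometric_of_lt_one hp0 hp1
  have hbsum : HasSum b (kI / (1 - p) + kM / (1 - q)) := by
    have hmain : HasSum (fun n => kI * p ^ n + kM * a n)
        (kI * (1 - p)⁻¹ + kM * (1 - q)⁻¹) := (hgeo.mul_left kI).add (ha'.mul_left kM)
    have hbeq : b = fun n => kI * p ^ n + kM * a n := by
      funext n
      rw [hb n, (Pb_pow_entries p q n).1, ha_def]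
      ring
    rw [hbeq]
    convert hmain using 1
    rw [div_eq_mul_inv, div_eq_mul_inv]
  refine ⟨hbsum, ?_⟩
  rw [hkM]
  field_simp
  ring
end

section
/- Assume the Markov restrictions of model M hold, that k_M ≠ 0, and that the matrix A₀ − q·A is invertible. Then q satisfies the fixed-point equation q = ρ + q·(D₀ ⬝ ((A₀ − q·A)⁻¹ *ᵥ B)), i.e. q solves the same implicit equation as the state-space coefficient η_k of the auto-regressive model. -/
open Matrix

theorem stmt_7 {N : ℕ} (hN : 1 ≤ N)
    (A₀ A : Matrix (Fin N) (Fin N) ℝ) (B C D₀ Y_I Y_M : Fin N → ℝ)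
    (e ρ p q k_I k_M : ℝ) (hp : p ≠ 1)
    (h1 : A₀ *ᵥ Y_I = p • (A *ᵥ Y_I) + (1 - p) • (A *ᵥ Y_M) + k_I • B + C)
    (h2 : A₀ *ᵥ Y_M = q • (A *ᵥ Y_M) + k_M • B)
    (h3 : k_I = D₀ ⬝ᵥ Y_I + e)
    (h4 : k_M = (ρ / (1 - p)) * k_I + D₀ ⬝ᵥ Y_M)
    (h5 : k_M = q * k_I / (1 - p))
    (hkM : k_M ≠ 0)
    (hinv : IsUnit (A₀ - q • A)) :
    q = ρ + q * (D₀ ⬝ᵥ ((A₀ - q • A)⁻¹ *ᵥ B)) := by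
  have hp' : (1 : ℝ) - p ≠ 0 := sub_ne_zero.mpr (Ne.symm hp)
  have hq : q ≠ 0 := by
    intro h; apply hkM; rw [h5, h]; ring
  have hdet : IsUnit (A₀ - q • A).det := (Matrix.isUnit_iff_isUnit_det _).mp hinv
  have hM : (A₀ - q • A) *ᵥ Y_M = k_M • B := by
    rw [sub_mulVec, smul_mulVec, h2]
    abel
  have hYM : Y_M = k_M • ((A₀ - q • A)⁻¹ *ᵥ B) := by
    have := congrArg (fun v => (A₀ - q • A)⁻¹ *ᵥ v) hM
    simpa [mulVec_mulVec, Matrix.nonsing_inv_mul _ hdet, mulVec_smul] using this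
  have hdot : D₀ ⬝ᵥ Y_M = k_M * (D₀ ⬝ᵥ ((A₀ - q • A)⁻¹ *ᵥ B)) := by
    rw [hYM, dotProduct_smul, smul_eq_mul]
  set s := D₀ ⬝ᵥ ((A₀ - q • A)⁻¹ *ᵥ B)
  rw [hdot] at h4
  have hkI : k_I = k_M * (1 - p) / q := by
    field_simp at h5 ⊢; linarith [h5]
  rw [hkI] at h4
  have key : k_M * q = k_M * (ρ + q * s) := by
    field_simp at h4
    have h6 : (1 - p) * (k_M * q) = (1 - p) * (k_M * (ρ + q * s)) := by
      linear_combination (1 - p) * k_M * h4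
    exact mul_left_cancel₀ hp' h6
  exact mul_left_cancel₀ hkM key
end

section
/- Let a, b, d, ρ, p, q, y_M, k_I, k_M be real numbers with p ≠ 1, 1 − a·q ≠ 0 and k_I ≠ 0. If y_M = a·q·y_M + b·k_M, k_M = (ρ/(1−p))·k_I + d·y_M, and k_M = q·k_I/(1−p), then q satisfies the quadratic equation a·q² − (1 + a·ρ − b·d)·q + ρ = 0. -/
theorem stmt_10 (a b d ρ p q y_M k_I k_M : ℝ) (hp : p ≠ 1) (haq : 1 - a * q ≠ 0)
    (hkI : k_I ≠ 0)
    (h1 : y_M = a * q * y_M + b * k_M)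
    (h2 : k_M = (ρ / (1 - p)) * k_I + d * y_M)
    (h3 : k_M = q * k_I / (1 - p)) :
    a * q ^ 2 - (1 + a * ρ - b * d) * q + ρ = 0 := by
  have hp' : (1:ℝ) - p ≠ 0 := sub_ne_zero.mpr (Ne.symm hp)
  field_simp at h2 h3
  have key : ((1 - a*q)*(q-ρ) - b*d*q) * k_I = 0 := by linear_combination d*(1-p)*h1 + (1-a*q)*h2 + (b*d - (1-a*q))*h3
  have := mul_eq_zero.mp key
  rcases this with h | h
  · nlinarith [h]
  · exact absurd h hkI
end
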